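/- arXiv:1112.3060 — 2 statements merged into one kernel-verified Lean document; each statement's English description precedes it below -/
import Mathlib

section
/- Fix integers p > q ≥ 0. Let P and Q be orthogonal projections on ℝ^N of ranks p and q respectively. Then there exist orthogonal projections P' and Q' on ℝ^N of ranks p−1 and q+1 respectively such that P + Q = P' + Q'. -/
open Matrix

private lemma trace_eq_rank_of_idem {N : ℕ} (A : Matrix (Fin N) (Fin N) ℝ)
    (h : A * A = A) : A.trace = (A.rank : ℝ) := by
  have hproj : LinearMap.IsProj (LinearMap.range A.mulVecLin) A.mulVecLin := by
    refine ⟨fun x => LinearMap.mem_range_self _ x, ?_⟩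
    rintro x ⟨y, rfl⟩
    rw [← LinearMap.comp_apply, ← Matrix.mulVecLin_mul, h]
  have ht := hproj.trace
  have h2 : LinearMap.trace ℝ (Fin N → ℝ) A.mulVecLin = A.trace := by
    rw [LinearMap.trace_eq_matrix_trace ℝ (Pi.basisFun ℝ (Fin N))]
    congr 1
    rw [LinearMap.toMatrix_eq_toMatrix']
    exact LinearMap.toMatrix'_toLin' A
  rw [← h2, ht, Matrix.rank]

/-- Given orthogonal projections `P, Q` on `ℝ^N` of ranks `p > q ≥ 0`, there exist
orthogonal projections `P', Q'` of ranks `p - 1` and `q + 1` with `P + Q = P' + Q'`. -/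
theorem exists_projections_rank_shift (N : ℕ) (p q : ℕ) (hpq : p > q)
    (P Q : Matrix (Fin N) (Fin N) ℝ)
    (hP2 : P * P = P) (hPsym : Pᵀ = P)
    (hQ2 : Q * Q = Q) (hQsym : Qᵀ = Q)
    (hPrank : P.rank = p) (hQrank : Q.rank = q) :
    ∃ P' Q' : Matrix (Fin N) (Fin N) ℝ,
      P' * P' = P' ∧ P'ᵀ = P' ∧
      Q' * Q' = Q' ∧ Q'ᵀ = Q' ∧
      P'.rank = p - 1 ∧ Q'.rank = q + 1 ∧
      P + Q = P' + Q' := by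
  classical
  set U := LinearMap.range P.mulVecLin with hU
  set V := LinearMap.ker Q.mulVecLin with hV
  have hfinU : Module.finrank ℝ U = p := by rw [hU, ← Matrix.rank, hPrank]
  have hrn := LinearMap.finrank_range_add_finrank_ker Q.mulVecLin
  rw [Module.finrank_pi, Fintype.card_fin] at hrn
  have hrQ : Module.finrank ℝ (LinearMap.range Q.mulVecLin) = q := by
    rw [← Matrix.rank, hQrank]
  have hfinV : Module.finrank ℝ V = N - q := by
    have : Module.finrank ℝ (LinearMap.ker Q.mulVecLin) = Module.finrank ℝ V := by rw [hV]
    omega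
  have hpN : p ≤ N := by rw [← hPrank]; exact P.rank_le_card_width.trans (by simp)
  have hsup := Submodule.finrank_sup_add_finrank_inf_eq U V
  have hsupN : Module.finrank ℝ ↥(U ⊔ V) ≤ N := by
    have := Submodule.finrank_le (U ⊔ V)
    rwa [Module.finrank_pi, Fintype.card_fin] at this
  have hinf : 0 < Module.finrank ℝ ↥(U ⊓ V) := by omega
  have hne : U ⊓ V ≠ ⊥ := by
    intro hbot
    rw [hbot, finrank_bot] at hinf
    exact lt_irrefl 0 hinf
  obtain ⟨v, hvmem, hvne⟩ := Submodule.exists_mem_ne_zero_of_ne_bot hne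
  have hvU : v ∈ U := hvmem.1
  have hvV : v ∈ V := hvmem.2
  -- v is fixed by P, killed by Q
  have hPv : P.mulVec v = v := by
    obtain ⟨y, hy⟩ := hvU
    have : P.mulVecLin (P.mulVecLin y) = P.mulVecLin y := by
      rw [← LinearMap.comp_apply, ← Matrix.mulVecLin_mul, hP2]
    simpa [hy] using this
  have hQv : Q.mulVec v = 0 := hvV
  -- normalize
  have hvv : (0:ℝ) < v ⬝ᵥ v := by
    have hnn : (0:ℝ) ≤ v ⬝ᵥ v := Finset.sum_nonneg fun i _ => mul_self_nonneg (v i)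
    rcases hnn.lt_or_eq with h | h
    · exact h
    · exact absurd (dotProduct_self_eq_zero.mp h.symm) hvne
  set c : ℝ := Real.sqrt (v ⬝ᵥ v) with hc
  have hcpos : 0 < c := Real.sqrt_pos.mpr hvv
  set u : Fin N → ℝ := c⁻¹ • v with hu
  have huu : u ⬝ᵥ u = 1 := by
    have hcc : c * c = v ⬝ᵥ v := Real.mul_self_sqrt hvv.le
    rw [hu, smul_dotProduct, dotProduct_smul, smul_eq_mul, smul_eq_mul]
    rw [← mul_assoc, ← mul_inv, hcc]
    exact inv_mul_cancel₀ (ne_of_gt hvv)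
  have hPu : P.mulVec u = u := by
    rw [hu, Matrix.mulVec_smul, hPv]
  have hQu : Q.mulVec u = 0 := by
    rw [hu, Matrix.mulVec_smul, hQv, smul_zero]
  set M : Matrix (Fin N) (Fin N) ℝ := vecMulVec u u with hM
  have hMsym : Mᵀ = M := by
    ext i j; simp [hM, vecMulVec_apply, mul_comm]
  have hMM : M * M = M := by
    ext i j
    simp only [hM, mul_apply, vecMulVec_apply]
    have : ∑ k, u i * u k * (u k * u j) = (u i * u j) * ∑ k, u k * u k := by
      rw [Finset.mul_sum]; congr 1; ext k; ring
    rw [this]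
    have : ∑ k, u k * u k = (1:ℝ) := huu
    rw [this, mul_one]
  have hPM : P * M = M := by
    ext i j
    simp only [mul_apply, hM, vecMulVec_apply]
    have : ∑ k, P i k * (u k * u j) = (∑ k, P i k * u k) * u j := by
      rw [Finset.sum_mul]; congr 1; ext k; ring
    rw [this]
    have : ∑ k, P i k * u k = u i := congrFun hPu i
    rw [this]
  have hQM : Q * M = 0 := by
    ext i j
    simp only [mul_apply, hM, vecMulVec_apply, Matrix.zero_apply]
    have : ∑ k, Q i k * (u k * u j) = (∑ k, Q i k * u k) * u j := by
      rw [Finset.sum_mul]; congr 1; ext k; ring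
    rw [this]
    have : ∑ k, Q i k * u k = 0 := congrFun hQu i
    rw [this, zero_mul]
  have hMP : M * P = M := by
    have : (M * P)ᵀ = Mᵀ := by rw [Matrix.transpose_mul, hPsym, hMsym, hPM]
    calc M * P = ((M * P)ᵀ)ᵀ := by rw [Matrix.transpose_transpose]
    _ = (Mᵀ)ᵀ := by rw [this]
    _ = M := Matrix.transpose_transpose M
  have hMQ : M * Q = 0 := by
    have : (M * Q)ᵀ = 0 := by rw [Matrix.transpose_mul, hQsym, hMsym, hQM]
    calc M * Q = ((M * Q)ᵀ)ᵀ := by rw [Matrix.transpose_transpose]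
    _ = (0 : Matrix (Fin N) (Fin N) ℝ)ᵀ := by rw [this]
    _ = 0 := by simp
  have hMtr : M.trace = 1 := by
    simpa [Matrix.trace, Matrix.diag, hM, vecMulVec_apply, dotProduct] using huu
  refine ⟨P - M, Q + M, ?_, ?_, ?_, ?_, ?_, ?_, ?_⟩
  · have : (P - M) * (P - M) = P * P - P * M - M * P + M * M := by noncomm_ring
    rw [this, hP2, hPM, hMP, hMM]; abel
  · rw [Matrix.transpose_sub, hPsym, hMsym]
  · have : (Q + M) * (Q + M) = Q * Q + Q * M + M * Q + M * M := by noncomm_ring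
    rw [this, hQ2, hQM, hMQ, hMM]; abel
  · rw [Matrix.transpose_add, hQsym, hMsym]
  · -- rank (P - M) = p - 1
    have hidem : (P - M) * (P - M) = P - M := by
      have : (P - M) * (P - M) = P * P - P * M - M * P + M * M := by noncomm_ring
      rw [this, hP2, hPM, hMP, hMM]; abel
    have htr := trace_eq_rank_of_idem (P - M) hidem
    have hPtr : P.trace = (p : ℝ) := by
      rw [trace_eq_rank_of_idem P hP2, hPrank]
    have h1 : (P - M).trace = (p : ℝ) - 1 := by
      rw [Matrix.trace_sub, hPtr, hMtr]
    have hp1 : 1 ≤ p := by omega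
    have : ((P - M).rank : ℝ) = ((p - 1 : ℕ) : ℝ) := by
      rw [← htr, h1, Nat.cast_sub hp1, Nat.cast_one]
    exact_mod_cast this
  · have hidem : (Q + M) * (Q + M) = Q + M := by
      have : (Q + M) * (Q + M) = Q * Q + Q * M + M * Q + M * M := by noncomm_ring
      rw [this, hQ2, hQM, hMQ, hMM]; abel
    have htr := trace_eq_rank_of_idem (Q + M) hidem
    have hQtr : Q.trace = (q : ℝ) := by
      rw [trace_eq_rank_of_idem Q hQ2, hQrank]
    have h1 : (Q + M).trace = (q : ℝ) + 1 := by
      rw [Matrix.trace_add, hQtr, hMtr]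
    have : ((Q + M).rank : ℝ) = ((q + 1 : ℕ) : ℝ) := by
      rw [← htr, h1]; push_cast; ring
    exact_mod_cast this
  · abel
end

section
/- Let n be a positive integer and N a positive integer divisible by n, and set α = 1 + 1/n. Then the sequence L = (N/n, N/n, …, N/n) consisting of n+1 copies of N/n belongs to TFF(α, N), and every sequence L' ∈ TFF(α, N) satisfies L' ≼ L. In particular, L is the unique maximal element of TFF(α, N) with respect to majorization. -/
open Matrix Kronecker

section TFFAux

/-! ### Auxiliary scalar lemmas for the simplex construction -/

noncomputable def TFFwfun (i A : ℕ) : ℝ :=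
  if i < A then 1 else if i = A then -(A : ℝ) else 0

noncomputable def TFFgfun (i A : ℕ) : ℝ := TFFwfun i A / Real.sqrt ((A : ℝ) * (A + 1))

lemma TFFsq_sqrt' (A : ℕ) : (Real.sqrt ((A : ℝ) * (A + 1)))^2 = (A : ℝ) * (A + 1) := by
  apply Real.sq_sqrt; positivity

lemma TFFfilter_range_lt (M A : ℕ) (h : A ≤ M) :
    (Finset.range M).filter (fun i => i < A) = Finset.range A := by
  ext i; simp only [Finset.mem_filter, Finset.mem_range]; omega

lemma TFFsum_if_lt (M A : ℕ) (h : A ≤ M) (c : ℝ) :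
    ∑ i ∈ Finset.range M, (if i < A then c else 0) = A * c := by
  rw [← Finset.sum_filter, TFFfilter_range_lt M A h, Finset.sum_const, Finset.card_range,
    nsmul_eq_mul]

lemma TFFsum_if_eq (M A : ℕ) (h : A < M) (c : ℝ) :
    ∑ i ∈ Finset.range M, (if i = A then c else 0) = c := by
  rw [Finset.sum_ite_eq' (Finset.range M) A (fun _ => c)]
  simp [Finset.mem_range.mpr h]

lemma TFFsum_w_sq (n A : ℕ) (hAn : A ≤ n) :
    ∑ i ∈ Finset.range (n+1), (TFFwfun i A)^2 = (A : ℝ) + (A:ℝ)^2 := by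
  have hpt : ∀ i, (TFFwfun i A)^2
      = (if i < A then (1:ℝ) else 0) + (if i = A then (A:ℝ)^2 else 0) := by
    intro i; unfold TFFwfun; split_ifs with h1 h2 <;> first | (exfalso; omega) | ring
  rw [Finset.sum_congr rfl (fun i _ => hpt i), Finset.sum_add_distrib,
    TFFsum_if_lt (n+1) A (by omega), TFFsum_if_eq (n+1) A (by omega)]
  ring

lemma TFFsum_w_mul (n A B : ℕ) (hAB : A < B) (hBn : B ≤ n) :
    ∑ i ∈ Finset.range (n+1), TFFwfun i A * TFFwfun i B = 0 := by
  have hpt : ∀ i, TFFwfun i A * TFFwfun i B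
      = (if i < A then (1:ℝ) else 0) + (if i = A then -(A:ℝ) else 0) := by
    intro i; unfold TFFwfun
    split_ifs with h1 h2 h3 h4 h5 h6 h7 <;> first | (exfalso; omega) | ring
  rw [Finset.sum_congr rfl (fun i _ => hpt i), Finset.sum_add_distrib,
    TFFsum_if_lt (n+1) A (by omega), TFFsum_if_eq (n+1) A (by omega)]
  ring

lemma TFFsum_col (n i : ℕ) (hi : i ≤ n) :
    ∑ a ∈ Finset.range n, (TFFwfun i (a+1))^2 / (((a:ℝ)+1) * ((a:ℝ)+2)) = (n:ℝ)/(n+1) := by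
  have hpt : ∀ a, (TFFwfun i (a+1))^2 / (((a:ℝ)+1) * ((a:ℝ)+2))
      = (if i ≤ a then 1/(((a:ℝ)+1) * ((a:ℝ)+2)) else 0)
        + (if a = i - 1 ∧ 1 ≤ i then ((i:ℝ))^2/(((a:ℝ)+1) * ((a:ℝ)+2)) else 0) := by
    intro a
    unfold TFFwfun
    rcases lt_trichotomy i (a+1) with h | h | h
    · rw [if_pos h, if_pos (by omega), if_neg (by omega)]
      simp
    · subst h
      rw [if_neg (by omega), if_pos rfl, if_neg (by omega), if_pos (by omega)]
      push_cast
      ring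
    · rw [if_neg (by omega), if_neg (by omega), if_neg (by omega), if_neg (by omega)]
      simp
  rw [Finset.sum_congr rfl (fun a _ => hpt a), Finset.sum_add_distrib]
  have h2 : ∑ a ∈ Finset.range n, (if a = i - 1 ∧ 1 ≤ i then ((i:ℝ))^2/(((a:ℝ)+1) * ((a:ℝ)+2)) else 0)
      = (i:ℝ)/((i:ℝ)+1) := by
    rcases Nat.eq_zero_or_pos i with h0 | h0
    · subst h0; simp
    · have hpt2 : ∀ a, (if a = i - 1 ∧ 1 ≤ i then ((i:ℝ))^2/(((a:ℝ)+1) * ((a:ℝ)+2)) else 0)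
          = (if a = i - 1 then ((i:ℝ))^2/(((a:ℝ)+1) * ((a:ℝ)+2)) else 0) := by
        intro a; split_ifs with h1 h3 <;> simp_all
      rw [Finset.sum_congr rfl (fun a _ => hpt2 a),
        Finset.sum_ite_eq' (Finset.range n) (i-1)
          (fun a => ((i:ℝ))^2/(((a:ℝ)+1) * ((a:ℝ)+2)))]
      rw [if_pos (Finset.mem_range.mpr (by omega))]
      have hcast : (((i-1 : ℕ)):ℝ) = (i:ℝ) - 1 := by
        have h1 : (1:ℕ) ≤ i := h0
        push_cast [h1]; ring
      rw [hcast, show ((i:ℝ)-1+1) = (i:ℝ) by ring, show ((i:ℝ)-1+2) = (i:ℝ)+1 by ring]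
      have hi0 : (0:ℝ) < (i:ℝ) := by exact_mod_cast h0
      rw [div_eq_div_iff (by positivity) (by positivity)]
      ring
  have h1 : ∑ a ∈ Finset.range n, (if i ≤ a then 1/(((a:ℝ)+1) * ((a:ℝ)+2)) else 0)
      = 1/((i:ℝ)+1) - 1/((n:ℝ)+1) := by
    rw [← Finset.sum_filter]
    have hf : (Finset.range n).filter (fun a => i ≤ a) = Finset.Ico i n := by
      ext a; simp only [Finset.mem_filter, Finset.mem_range, Finset.mem_Ico]; omega
    rw [hf, Finset.sum_Ico_eq_sum_range]
    set F : ℕ → ℝ := fun b => 1/((i:ℝ)+(b:ℝ)+1) with hF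
    have hstep : ∀ b, (1:ℝ)/((((i+b:ℕ)):ℝ)+1) * (1/((((i+b:ℕ)):ℝ)+2)) = F b - F (b+1) := by
      intro b
      rw [hF]
      push_cast
      have hb1 : ((i:ℝ)+(b:ℝ)+1) ≠ 0 := by positivity
      have hb2 : ((i:ℝ)+(b:ℝ)+2) ≠ 0 := by positivity
      rw [show (i:ℝ) + ((b:ℝ)+1) + 1 = (i:ℝ)+(b:ℝ)+2 by ring,
        div_sub_div _ _ hb1 hb2, div_mul_div_comm,
        div_eq_div_iff (by positivity) (by positivity)]
      ring
    have hform : ∀ b, (1:ℝ)/(((((i+b:ℕ)):ℝ)+1) * ((((i+b:ℕ)):ℝ)+2)) = F b - F (b+1) := by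
      intro b
      rw [← hstep b]
      rw [div_mul_div_comm, one_mul]
    rw [Finset.sum_congr rfl (fun b _ => hform b), Finset.sum_range_sub' F (n-i), hF]
    have hni : i + (n - i) = n := by omega
    have : ((( (n-i) : ℕ)):ℝ) = (n:ℝ) - (i:ℝ) := by
      have h1 : i ≤ n := hi
      push_cast [h1]; ring
    simp only [this]
    norm_num
  rw [h1, h2]
  have hi1 : ((i:ℝ)+1) ≠ 0 := by positivity
  have hn1 : ((n:ℝ)+1) ≠ 0 := by positivity
  field_simp
  ring

lemma TFFgsum_col (n i : ℕ) (hi : i ≤ n) :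
    ∑ a ∈ Finset.range n, (TFFgfun i (a+1))^2 = (n:ℝ)/(n+1) := by
  have hpt : ∀ a : ℕ, (TFFgfun i (a+1))^2
      = (TFFwfun i (a+1))^2 / (((a:ℝ)+1) * ((a:ℝ)+2)) := by
    intro a
    unfold TFFgfun
    rw [div_pow, TFFsq_sqrt' (a+1),
      show (((a+1:ℕ)):ℝ) = (a:ℝ)+1 by push_cast; ring]
    rw [show ((a:ℝ)+1)+1 = (a:ℝ)+2 by ring]
  rw [Finset.sum_congr rfl (fun a _ => hpt a)]
  exact TFFsum_col n i hi

lemma TFFgsum_diag (n A : ℕ) (hA1 : 1 ≤ A) (hAn : A ≤ n) :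
    ∑ i ∈ Finset.range (n+1), TFFgfun i A * TFFgfun i A = 1 := by
  have hpt : ∀ i : ℕ, TFFgfun i A * TFFgfun i A
      = (TFFwfun i A)^2 / ((A:ℝ) * ((A:ℝ)+1)) := by
    intro i
    unfold TFFgfun
    rw [div_mul_div_comm, ← sq, ← sq, TFFsq_sqrt' A]
  rw [Finset.sum_congr rfl (fun i _ => hpt i), ← Finset.sum_div, TFFsum_w_sq n A hAn]
  have hA0 : (0:ℝ) < (A:ℝ) := by exact_mod_cast hA1
  rw [div_eq_one_iff_eq (by positivity)]
  ring

lemma TFFgsum_off (n A B : ℕ) (hAB : A < B) (hBn : B ≤ n) :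
    ∑ i ∈ Finset.range (n+1), TFFgfun i A * TFFgfun i B = 0 := by
  have hpt : ∀ i : ℕ, TFFgfun i A * TFFgfun i B
      = (TFFwfun i A * TFFwfun i B)
        / (Real.sqrt ((A : ℝ) * (A + 1)) * Real.sqrt ((B : ℝ) * (B + 1))) := by
    intro i
    unfold TFFgfun
    rw [div_mul_div_comm]
  rw [Finset.sum_congr rfl (fun i _ => hpt i), ← Finset.sum_div,
    TFFsum_w_mul n A B hAB hBn, zero_div]

/-! ### The simplex projections -/

noncomputable def TFFpmat (n : ℕ) (i : Fin (n+1)) : Matrix (Fin n) (Fin n) ℝ :=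
  Matrix.of fun a b => (((n:ℝ)+1)/n) * (TFFgfun i ((a:ℕ)+1) * TFFgfun i ((b:ℕ)+1))

lemma TFFpmat_idem (n : ℕ) (hn : 0 < n) (i : Fin (n+1)) :
    TFFpmat n i * TFFpmat n i = TFFpmat n i := by
  have hn0 : (n:ℝ) ≠ 0 := Nat.cast_ne_zero.mpr hn.ne'
  ext a b
  rw [Matrix.mul_apply]
  simp only [TFFpmat, Matrix.of_apply]
  have : ∀ x : Fin n, (((n:ℝ)+1)/n) * (TFFgfun i ((a:ℕ)+1) * TFFgfun i ((x:ℕ)+1))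
      * ((((n:ℝ)+1)/n) * (TFFgfun i ((x:ℕ)+1) * TFFgfun i ((b:ℕ)+1)))
      = ((((n:ℝ)+1)/n)^2 * (TFFgfun i ((a:ℕ)+1) * TFFgfun i ((b:ℕ)+1))) * (TFFgfun i ((x:ℕ)+1))^2 := by
    intro x; ring
  rw [Finset.sum_congr rfl (fun x _ => this x), ← Finset.mul_sum]
  have hcol : ∑ x : Fin n, (TFFgfun i ((x:ℕ)+1))^2 = (n:ℝ)/(n+1) := by
    rw [Fin.sum_univ_eq_sum_range (fun x => (TFFgfun i (x+1))^2) n]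
    exact TFFgsum_col n i (by omega)
  rw [hcol]
  field_simp

lemma TFFpmat_symm (n : ℕ) (i : Fin (n+1)) : (TFFpmat n i)ᵀ = TFFpmat n i := by
  ext a b
  simp only [TFFpmat, Matrix.transpose_apply, Matrix.of_apply]
  ring

lemma TFFpmat_trace (n : ℕ) (hn : 0 < n) (i : Fin (n+1)) : (TFFpmat n i).trace = 1 := by
  have hn0 : (n:ℝ) ≠ 0 := Nat.cast_ne_zero.mpr hn.ne'
  rw [Matrix.trace]
  simp only [Matrix.diag_apply, TFFpmat, Matrix.of_apply]
  rw [← Finset.mul_sum]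
  have hcol : ∑ x : Fin n, TFFgfun i ((x:ℕ)+1) * TFFgfun i ((x:ℕ)+1) = (n:ℝ)/(n+1) := by
    rw [Fin.sum_univ_eq_sum_range (fun x => TFFgfun i (x+1) * TFFgfun i (x+1)) n]
    have := TFFgsum_col n i (by omega)
    rw [← this]
    exact Finset.sum_congr rfl fun x _ => by rw [sq]
  rw [hcol]
  field_simp

lemma TFFpmat_sum (n : ℕ) (hn : 0 < n) :
    ∑ i : Fin (n+1), TFFpmat n i = (1 + 1/(n:ℝ)) • (1 : Matrix (Fin n) (Fin n) ℝ) := by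
  have hn0 : (n:ℝ) ≠ 0 := Nat.cast_ne_zero.mpr hn.ne'
  ext a b
  rw [Matrix.sum_apply]
  simp only [TFFpmat, Matrix.of_apply, Matrix.smul_apply, Matrix.one_apply]
  rw [← Finset.mul_sum]
  have hsum : ∑ i : Fin (n+1), TFFgfun i ((a:ℕ)+1) * TFFgfun i ((b:ℕ)+1)
      = if a = b then (1:ℝ) else 0 := by
    rw [Fin.sum_univ_eq_sum_range (fun i => TFFgfun i ((a:ℕ)+1) * TFFgfun i ((b:ℕ)+1)) (n+1)]
    by_cases hab : a = b
    · subst hab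
      rw [if_pos rfl]
      exact TFFgsum_diag n ((a:ℕ)+1) (by omega) (by omega)
    · rw [if_neg hab]
      have hne : (a:ℕ)+1 ≠ (b:ℕ)+1 := by
        intro h; apply hab; exact Fin.ext (by omega)
      rcases lt_or_gt_of_ne hne with h | h
      · exact TFFgsum_off n _ _ h (by omega)
      · rw [Finset.sum_congr rfl (fun i _ => mul_comm (TFFgfun i ((a:ℕ)+1)) (TFFgfun i ((b:ℕ)+1)))]
        exact TFFgsum_off n _ _ h (by omega)
  rw [hsum]
  split_ifs with h
  · simp only [smul_eq_mul, mul_one]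
    field_simp
  · simp

/-! ### rank/trace lemmas -/

lemma TFFrank_eq_trace_of_proj {N : ℕ} (P : Matrix (Fin N) (Fin N) ℝ)
    (h1 : P * P = P) (h2 : Pᵀ = P) : (P.rank : ℝ) = P.trace := by
  have hH : P.IsHermitian := by
    rw [Matrix.IsHermitian, Matrix.conjTranspose_eq_transpose_of_trivial, h2]
  have heig : ∀ i, hH.eigenvalues i = 0 ∨ hH.eigenvalues i = 1 := by
    intro i
    have hv := hH.mulVec_eigenvectorBasis i
    have hvne : (⇑(hH.eigenvectorBasis i) : Fin N → ℝ) ≠ 0 := by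
      have := hH.eigenvectorBasis.orthonormal.ne_zero i
      intro h; apply this; ext j; exact congrFun h j
    have h2v : P *ᵥ (P *ᵥ ⇑(hH.eigenvectorBasis i)) = P *ᵥ ⇑(hH.eigenvectorBasis i) := by
      rw [Matrix.mulVec_mulVec, h1]
    rw [hv, Matrix.mulVec_smul, hv, smul_smul] at h2v
    have h0 : (hH.eigenvalues i * hH.eigenvalues i - hH.eigenvalues i) • (⇑(hH.eigenvectorBasis i) : Fin N → ℝ) = 0 := by
      rw [sub_smul, h2v, sub_self]
    have hmu : hH.eigenvalues i * hH.eigenvalues i - hH.eigenvalues i = 0 := by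
      by_contra hne
      exact hvne (by simpa [hne] using congrArg (fun v => (hH.eigenvalues i * hH.eigenvalues i - hH.eigenvalues i)⁻¹ • v) h0)
    have : hH.eigenvalues i * (hH.eigenvalues i - 1) = 0 := by ring_nf; linarith [hmu]
    rcases mul_eq_zero.mp this with h | h
    · left; exact h
    · right; linarith
  have htr : P.trace = ∑ i, hH.eigenvalues i := by
    conv_lhs => rw [hH.spectral_theorem]
    rw [Unitary.conjStarAlgAut_apply, Matrix.trace_mul_cycle]
    have hu : (star (hH.eigenvectorUnitary : Matrix (Fin N) (Fin N) ℝ)) * (hH.eigenvectorUnitary : Matrix (Fin N) (Fin N) ℝ) = 1 :=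
      (Unitary.mem_iff.mp (hH.eigenvectorUnitary).2).1
    rw [hu, one_mul, Matrix.trace_diagonal]
    simp
  rw [hH.rank_eq_card_non_zero_eigs, htr, Fintype.card_subtype, Finset.card_eq_sum_ones]
  push_cast
  rw [Finset.sum_filter]
  apply Finset.sum_congr rfl
  intro i _
  rcases heig i with h | h <;> simp [h]

lemma TFFrank_add_le {N : ℕ} (A B : Matrix (Fin N) (Fin N) ℝ) :
    (A + B).rank ≤ A.rank + B.rank := by
  rw [Matrix.rank, Matrix.rank, Matrix.rank]
  have hr : LinearMap.range (A + B).mulVecLin ≤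
      LinearMap.range A.mulVecLin ⊔ LinearMap.range B.mulVecLin := by
    rintro x ⟨v, rfl⟩
    rw [Matrix.mulVecLin_add]
    exact Submodule.add_mem_sup (LinearMap.mem_range_self _ v) (LinearMap.mem_range_self _ v)
  calc Module.finrank ℝ (LinearMap.range (A + B).mulVecLin)
      ≤ Module.finrank ℝ ((LinearMap.range A.mulVecLin) ⊔ (LinearMap.range B.mulVecLin) : Submodule ℝ (Fin N → ℝ)) :=
        Submodule.finrank_mono hr
    _ ≤ _ := Submodule.finrank_add_le_finrank_add_finrank _ _

lemma TFFrank_sum_le {N : ℕ} {ι : Type*} (s : Finset ι) (P : ι → Matrix (Fin N) (Fin N) ℝ) :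
    (∑ i ∈ s, P i).rank ≤ ∑ i ∈ s, (P i).rank := by
  induction s using Finset.cons_induction with
  | empty => simp
  | cons a s ha ih =>
    rw [Finset.sum_cons, Finset.sum_cons]
    exact (TFFrank_add_le _ _).trans (by omega)

lemma TFFisUnit_smul_one_sub_proj {N : ℕ} (α : ℝ) (hα : 1 < α) (P : Matrix (Fin N) (Fin N) ℝ)
    (h1 : P * P = P) : IsUnit (α • (1 : Matrix (Fin N) (Fin N) ℝ) - P) := by
  have hα0 : α ≠ 0 := by linarith
  have hα1 : α - 1 ≠ 0 := by intro h; apply hα.ne'; linarith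
  apply IsUnit.of_mul_eq_one
    (b := (1/α) • (1 : Matrix (Fin N) (Fin N) ℝ) + (1/(α*(α-1))) • P)
  simp only [sub_mul, Matrix.mul_add, Matrix.smul_mul, Matrix.mul_smul, one_mul,
    Matrix.mul_one, h1, smul_smul]
  have e1 : (1/α) * α = 1 := by field_simp
  have e2 : (1 / (α * (α - 1))) * α = 1/α + 1/(α*(α-1)) := by field_simp; ring
  rw [e1, e2, one_smul, add_smul]
  abel

lemma TFFcard_filter_val_lt (K k : ℕ) (hk : k ≤ K) :
    ((Finset.univ : Finset (Fin K)).filter (fun i : Fin K => (i : ℕ) < k)).card = k := by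
  have h : ∀ m ∈ Finset.range k, m < K := fun m hm => lt_of_lt_of_le (Finset.mem_range.mp hm) hk
  have : (Finset.univ : Finset (Fin K)).filter (fun i : Fin K => (i : ℕ) < k)
      = (Finset.range k).attachFin h := by
    ext i
    simp [Finset.mem_attachFin]
  rw [this, Finset.card_attachFin, Finset.card_range]

lemma TFFtrace_submatrix_equiv {M O : Type*} [Fintype M] [Fintype O]
    (e : M ≃ O) (A : Matrix O O ℝ) : (A.submatrix e e).trace = A.trace := by
  rw [Matrix.trace, Matrix.trace]
  exact Fintype.sum_equiv e _ _ (fun i => rfl)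

end TFFAux

/-- `L` is a tight fusion frame (TFF) sequence for frame bound `α` in dimension `N`. -/
def IsTFF (N : ℕ) (α : ℝ) {K : ℕ} (L : Fin K → ℕ) : Prop :=
  ∃ P : Fin K → Matrix (Fin N) (Fin N) ℝ,
    (∀ i, P i * P i = P i) ∧
    (∀ i, (P i)ᵀ = P i) ∧
    (∀ i, (P i).rank = L i) ∧
    (∑ i, P i) = α • (1 : Matrix (Fin N) (Fin N) ℝ)

/-- `Majorizes L L'` means `L ≼ L'`: the two sequences have equal total sums and the
partial sums of `L` are dominated by those of `L'` for all `k ≤ min K K'`. -/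
def Majorizes {K K' : ℕ} (L : Fin K → ℕ) (L' : Fin K' → ℕ) : Prop :=
  (∑ i, L i = ∑ i, L' i) ∧
  ∀ k ≤ min K K',
    ∑ i ∈ Finset.univ.filter (fun i : Fin K => (i : ℕ) < k), L i ≤
      ∑ i ∈ Finset.univ.filter (fun i : Fin K' => (i : ℕ) < k), L' i

lemma TFFpart1 (n N : ℕ) (hn : 0 < n) (hN : 0 < N) (hdvd : n ∣ N) :
    IsTFF N (1 + 1 / (n : ℝ)) (fun _ : Fin (n + 1) => N / n) := by
  have hn0 : (n:ℝ) ≠ 0 := Nat.cast_ne_zero.mpr hn.ne'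
  set m : ℕ := N / n with hm_def
  have hmn : m * n = N := Nat.div_mul_cancel hdvd
  let e : Fin N ≃ Fin m × Fin n := (finCongr hmn.symm).trans finProdFinEquiv.symm
  refine ⟨fun i => ((1 : Matrix (Fin m) (Fin m) ℝ) ⊗ₖ TFFpmat n i).submatrix e e,
    ?_, ?_, ?_, ?_⟩
  · intro i
    rw [Matrix.submatrix_mul_equiv, ← Matrix.mul_kronecker_mul, one_mul, TFFpmat_idem n hn i]
  · intro i
    rw [Matrix.transpose_submatrix, ← Matrix.kroneckerMap_transpose, Matrix.transpose_one,
      TFFpmat_symm]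
  · intro i
    have hPP : ((1 : Matrix (Fin m) (Fin m) ℝ) ⊗ₖ TFFpmat n i).submatrix e e
        * ((1 : Matrix (Fin m) (Fin m) ℝ) ⊗ₖ TFFpmat n i).submatrix e e
        = ((1 : Matrix (Fin m) (Fin m) ℝ) ⊗ₖ TFFpmat n i).submatrix e e := by
      rw [Matrix.submatrix_mul_equiv, ← Matrix.mul_kronecker_mul, one_mul, TFFpmat_idem n hn i]
    have hPT : (((1 : Matrix (Fin m) (Fin m) ℝ) ⊗ₖ TFFpmat n i).submatrix e e)ᵀ
        = ((1 : Matrix (Fin m) (Fin m) ℝ) ⊗ₖ TFFpmat n i).submatrix e e := by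
      rw [Matrix.transpose_submatrix, ← Matrix.kroneckerMap_transpose, Matrix.transpose_one,
        TFFpmat_symm]
    have hreal := TFFrank_eq_trace_of_proj _ hPP hPT
    rw [TFFtrace_submatrix_equiv, Matrix.trace_kronecker, Matrix.trace_one,
      TFFpmat_trace n hn i, mul_one] at hreal
    have : ((((1 : Matrix (Fin m) (Fin m) ℝ) ⊗ₖ TFFpmat n i).submatrix e e).rank : ℝ)
        = ((m : ℕ) : ℝ) := by
      rw [hreal]; simp
    exact_mod_cast this
  · have hsub : ∑ i : Fin (n+1), ((1 : Matrix (Fin m) (Fin m) ℝ) ⊗ₖ TFFpmat n i).submatrix e e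
        = ((∑ i : Fin (n+1), (1 : Matrix (Fin m) (Fin m) ℝ) ⊗ₖ TFFpmat n i)).submatrix e e := by
      ext a b
      simp [Matrix.sum_apply]
    rw [hsub]
    have hkron : ∑ i : Fin (n+1), (1 : Matrix (Fin m) (Fin m) ℝ) ⊗ₖ TFFpmat n i
        = (1 : Matrix (Fin m) (Fin m) ℝ) ⊗ₖ (∑ i : Fin (n+1), TFFpmat n i) := by
      ext ⟨a, b⟩ ⟨c, d⟩
      simp [Matrix.sum_apply, Matrix.kroneckerMap_apply, Finset.mul_sum]
    rw [hkron, TFFpmat_sum n hn, Matrix.kronecker_smul, Matrix.one_kronecker_one]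
    have : (((1 + 1/(n:ℝ)) • (1 : Matrix (Fin m × Fin n) (Fin m × Fin n) ℝ)).submatrix e e)
        = (1 + 1/(n:ℝ)) • ((1 : Matrix (Fin m × Fin n) (Fin m × Fin n) ℝ).submatrix e e) := by
      rfl
    rw [this, Matrix.submatrix_one_equiv]

lemma TFFpart2 (n N : ℕ) (hn : 0 < n) (hdvd : n ∣ N) (K : ℕ) (L' : Fin K → ℕ)
    (hTFF : IsTFF N (1 + 1 / (n : ℝ)) L') : Majorizes L' (fun _ : Fin (n + 1) => N / n) := by
  obtain ⟨P, hmul, htrans, hrank, hsum⟩ := hTFF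
  set α : ℝ := 1 + 1 / (n : ℝ) with hα_def
  set m : ℕ := N / n with hm_def
  have hn0 : (n : ℝ) ≠ 0 := Nat.cast_ne_zero.mpr hn.ne'
  have hα1 : (1 : ℝ) < α := by
    rw [hα_def]
    have : 0 < 1 / (n : ℝ) := by positivity
    linarith
  have hNnm : N = n * m := (Nat.mul_div_cancel' hdvd).symm
  have htr : ∀ i, ((L' i : ℕ) : ℝ) = (P i).trace := by
    intro i
    rw [← hrank i]
    exact TFFrank_eq_trace_of_proj (P i) (hmul i) (htrans i)
  have hsum_nat : ∑ i, L' i = N + m := by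
    have hreal : ((∑ i, L' i : ℕ) : ℝ) = ((N + m : ℕ) : ℝ) := by
      push_cast
      rw [Finset.sum_congr rfl (fun i _ => htr i), ← Matrix.trace_sum, hsum,
        Matrix.trace_smul, Matrix.trace_one]
      simp only [smul_eq_mul, Fintype.card_fin]
      rw [hα_def]
      have hNr : (N : ℝ) = n * m := by exact_mod_cast hNnm
      rw [hNr]
      field_simp
    exact_mod_cast hreal
  have hbound : ∀ i, L' i ≤ m := by
    intro i
    have hQ : α • (1 : Matrix (Fin N) (Fin N) ℝ) - P i = ∑ j ∈ Finset.univ.erase i, P j := by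
      rw [← hsum, ← Finset.add_sum_erase _ _ (Finset.mem_univ i)]
      abel
    have hrankQ : (α • (1 : Matrix (Fin N) (Fin N) ℝ) - P i).rank = N := by
      rw [Matrix.rank_of_isUnit _ (TFFisUnit_smul_one_sub_proj α hα1 (P i) (hmul i)),
        Fintype.card_fin]
    have h1 : N ≤ ∑ j ∈ Finset.univ.erase i, L' j := by
      rw [← hrankQ, hQ]
      refine (TFFrank_sum_le _ _).trans ?_
      exact Finset.sum_le_sum fun j _ => le_of_eq (hrank j)
    have h2 : ∑ j ∈ Finset.univ.erase i, L' j + L' i = N + m := by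
      rw [Finset.sum_erase_add _ _ (Finset.mem_univ i)]
      exact hsum_nat
    omega
  constructor
  · rw [hsum_nat, Finset.sum_const, Finset.card_univ, Fintype.card_fin, smul_eq_mul, hNnm]
    ring
  · intro k hk
    rw [Finset.sum_const, TFFcard_filter_val_lt (n+1) k (hk.trans (min_le_right _ _)),
      smul_eq_mul]
    calc ∑ i ∈ Finset.univ.filter (fun i : Fin K => (i : ℕ) < k), L' i
        ≤ ∑ _i ∈ Finset.univ.filter (fun i : Fin K => (i : ℕ) < k), m :=
          Finset.sum_le_sum fun i _ => hbound i
      _ = k * m := by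
          rw [Finset.sum_const, TFFcard_filter_val_lt K k (hk.trans (min_le_left _ _)),
            smul_eq_mul]

/-- For `α = 1 + 1/n` with `n ∣ N`, the sequence of `n + 1` copies of `N/n` is the unique
maximal element of `TFF(α, N)` with respect to majorization. -/
theorem TFF_max_one_plus_inv (n N : ℕ) (hn : 0 < n) (hN : 0 < N) (hdvd : n ∣ N) :
    IsTFF N (1 + 1 / (n : ℝ)) (fun _ : Fin (n + 1) => N / n) ∧
    ∀ (K : ℕ) (L' : Fin K → ℕ), Antitone L' → (∀ i, 0 < L' i) →
      IsTFF N (1 + 1 / (n : ℝ)) L' → Majorizes L' (fun _ : Fin (n + 1) => N / n) := by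
  exact ⟨TFFpart1 n N hn hN hdvd, fun K L' _ _ h => TFFpart2 n N hn hdvd K L' h⟩
end
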